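/- Let E ∈ (-2,2) with E = 2cos(πk), k ∈ (0,1), let b ∈ ℕ and K > 0, and let V : ℕ → ℝ satisfy |V(n)| ≤ K/(n-b) and |V(n)/sin(πk)| < 1/2 for all n > b. Let θ(n) be the Prüfer angle of a solution of u(n+1) + u(n-1) + V(n)u(n) = E·u(n). Then there exists a constant C (depending only on E and K) such that for all n > n₀ > b, |∑_{l=n₀}^{n} e^{2πi·θ(l)}/(l-b)| ≤ C/(n₀-b). -/

import Mathlib

noncomputable section

/-- `u` solves the eigen-equation `u(n+1) + u(n-1) + V(n)u(n) = E·u(n)` for all `n ≥ 1`. -/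
def EigenEq (V : ℕ → ℝ) (E : ℝ) (u : ℕ → ℝ) : Prop :=
  ∀ n : ℕ, 1 ≤ n → u (n + 1) + u (n - 1) + V n * u n = E * u n

/-- `(R, θ)` are modified Prüfer variables (radius and angle) of the solution `u`,
with quasimomentum `k`: `u(n-1) = R(n)·sin(πθ(n) - πk)` and
`(u(n) - cos(πk)·u(n-1))/sin(πk) = R(n)·cos(πθ(n) - πk)`, with `R(n) > 0`. -/
def PruferRel (k : ℝ) (u R θ : ℕ → ℝ) : Prop :=
  ∀ n : ℕ, 1 ≤ n → 0 < R n ∧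
    u (n - 1) = R n * Real.sin (Real.pi * θ n - Real.pi * k) ∧
    (u n - Real.cos (Real.pi * k) * u (n - 1)) / Real.sin (Real.pi * k)
      = R n * Real.cos (Real.pi * θ n - Real.pi * k)

/-- The Prüfer angle is chosen along the continuous branch:
`θ(n+1) - θ(n) - k ∈ (-1/2, 1/2)`. -/
def BranchCond (k : ℝ) (θ : ℕ → ℝ) : Prop :=
  ∀ n : ℕ, 1 ≤ n → |θ (n + 1) - θ n - k| < 1 / 2

lemma exp_real_mul_I_re (r x : ℝ) :
    (((r : ℝ) : ℂ) * Complex.exp (-((x : ℝ) : ℂ) * Complex.I)).re = r * Real.cos x := by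
  have h : (-((x : ℝ) : ℂ)) = (((-x : ℝ)) : ℂ) := by push_cast; ring
  simp only [Complex.mul_re, Complex.ofReal_re, Complex.ofReal_im, zero_mul, sub_zero]
  rw [h, Complex.exp_ofReal_mul_I_re, Real.cos_neg]

lemma exp_real_mul_I_im (r x : ℝ) :
    (((r : ℝ) : ℂ) * Complex.exp (-((x : ℝ) : ℂ) * Complex.I)).im = -(r * Real.sin x) := by
  have h : (-((x : ℝ) : ℂ)) = (((-x : ℝ)) : ℂ) := by push_cast; ring
  simp only [Complex.mul_im, Complex.ofReal_re, Complex.ofReal_im, zero_mul, add_zero]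
  rw [h, Complex.exp_ofReal_mul_I_im, Real.sin_neg]
  ring

lemma conj_div_diff_bound (z t : ℂ) (hz : z ≠ 0) (ht : ‖t‖ ≤ ‖z‖ / 2) :
    ‖ ((starRingEnd ℂ) (z + t) / (z + t) - (starRingEnd ℂ) z / z)‖
      ≤ 4 * ‖t‖ / ‖z‖ := by
  have hz' : 0 < ‖z‖ := norm_pos_iff.mpr hz
  have h1 : ‖z‖ ≤ ‖ (z + t)‖ + ‖t‖ := by
    calc ‖z‖ = ‖ ((z + t) + (-t))‖ := by rw [show (z + t) + (-t) = z by ring]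
    _ ≤ ‖ (z + t)‖ + ‖ (-t)‖ := norm_add_le _ _
    _ = ‖ (z + t)‖ + ‖t‖ := by rw [norm_neg]
  have hzt_abs : ‖z‖ / 2 ≤ ‖ (z + t)‖ := by linarith
  have hzt : z + t ≠ 0 := by
    intro h
    rw [h, norm_zero] at hzt_abs
    linarith
  have key : (starRingEnd ℂ) (z + t) / (z + t) - (starRingEnd ℂ) z / z
      = ((starRingEnd ℂ) t * z - (starRingEnd ℂ) z * t) / ((z + t) * z) := by
    field_simp
    simp only [map_add]; ring
  rw [key, norm_div, norm_mul]
  have hnum : ‖ ((starRingEnd ℂ) t * z - (starRingEnd ℂ) z * t)‖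
      ≤ 2 * (‖t‖ * ‖z‖) := by
    calc ‖ ((starRingEnd ℂ) t * z - (starRingEnd ℂ) z * t)‖
        ≤ ‖ ((starRingEnd ℂ) t * z)‖ + ‖ ((starRingEnd ℂ) z * t)‖ :=
          norm_sub_le _ _
      _ = 2 * (‖t‖ * ‖z‖) := by
          simp [Complex.norm_conj]; ring
  have hden : ‖z‖ / 2 * ‖z‖ ≤ ‖ (z + t)‖ * ‖z‖ :=
    mul_le_mul_of_nonneg_right hzt_abs (norm_nonneg z)
  calc ‖ ((starRingEnd ℂ) t * z - (starRingEnd ℂ) z * t)‖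
        / (‖ (z + t)‖ * ‖z‖)
      ≤ 2 * (‖t‖ * ‖z‖) / (‖z‖ / 2 * ‖z‖) :=
        div_le_div₀ (by positivity) hnum (by positivity) hden
    _ = 4 * ‖t‖ / ‖z‖ := by field_simp; ring

open Real in
lemma key_step (k : ℝ) (hk : k ∈ Set.Ioo (0 : ℝ) 1) (V u R θ : ℕ → ℝ) (n : ℕ) (hn : 1 ≤ n)
    (hV : |V n / Real.sin (π * k)| < 1 / 2)
    (heig : u (n + 1) + u (n - 1) + V n * u n = 2 * Real.cos (π * k) * u n)
    (h1R : 0 < R n)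
    (h1a : u (n - 1) = R n * Real.sin (π * θ n - π * k))
    (h1b : (u n - Real.cos (π * k) * u (n - 1)) / Real.sin (π * k)
      = R n * Real.cos (π * θ n - π * k))
    (h2R : 0 < R (n + 1))
    (h2a : u n = R (n + 1) * Real.sin (π * θ (n + 1) - π * k))
    (h2b : (u (n + 1) - Real.cos (π * k) * u n) / Real.sin (π * k)
      = R (n + 1) * Real.cos (π * θ (n + 1) - π * k)) :
    ‖ (Complex.exp (2 * (π : ℂ) * Complex.I * ((θ (n + 1) : ℝ) : ℂ))
        - Complex.exp (2 * (π : ℂ) * Complex.I * ((k : ℝ) : ℂ))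
          * Complex.exp (2 * (π : ℂ) * Complex.I * ((θ n : ℝ) : ℂ)))‖
      ≤ 4 * |V n| / Real.sin (π * k) := by
  obtain ⟨hk0, hk1⟩ := hk
  have hs : 0 < Real.sin (π * k) := by
    apply Real.sin_pos_of_pos_of_lt_pi
    · positivity
    · nlinarith [Real.pi_pos]
  set s := Real.sin (π * k) with hsdef
  set c := Real.cos (π * k) with hcdef
  have hsc : s ^ 2 + c ^ 2 = 1 := by
    rw [hsdef, hcdef]; exact Real.sin_sq_add_cos_sq _
  -- real preliminaries
  have hun : u n = c * u (n - 1) + s * (R n * Real.cos (π * θ n - π * k)) := by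
    rw [← h1b]; field_simp; ring
  have hun1 : u (n + 1) = c * u n + s * (R (n + 1) * Real.cos (π * θ (n + 1) - π * k)) := by
    rw [← h2b]; field_simp; ring
  have hsin_add : Real.sin (π * θ n) = Real.sin (π * θ n - π * k) * c
      + Real.cos (π * θ n - π * k) * s := by
    rw [hsdef, hcdef, ← Real.sin_add]; ring_nf
  have hcos_add : Real.cos (π * θ n) = Real.cos (π * θ n - π * k) * c
      - Real.sin (π * θ n - π * k) * s := by
    rw [hsdef, hcdef, ← Real.cos_add]; ring_nf
  have e1 : s * (R (n + 1) * Real.cos (π * θ (n + 1) - π * k)) = u (n + 1) - c * u n := by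
    rw [hun1]; ring
  have hI : u n = R n * Real.sin (π * θ n) := by
    rw [hsin_add, hun, h1a]; ring
  have hII : s * (R (n + 1) * Real.cos (π * θ (n + 1) - π * k))
      = s * (R n * Real.cos (π * θ n)) - V n * (R n * Real.sin (π * θ n)) := by
    rw [hcos_add, hsin_add]
    linear_combination e1 + heig + (c - V n) * hun + (c ^ 2 - 1 - V n * c) * h1a
      + (R n * Real.sin (π * θ n - π * k)) * hsc
  -- complex setup
  set Z : ℂ := ((s * R n : ℝ) : ℂ) * Complex.exp (-((π * θ n : ℝ) : ℂ) * Complex.I) with hZ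
  set W : ℂ := ((s * R (n + 1) : ℝ) : ℂ)
    * Complex.exp (-((π * θ (n + 1) - π * k : ℝ) : ℂ) * Complex.I) with hW
  set t : ℂ := ((-(V n * (R n * Real.sin (π * θ n))) : ℝ) : ℂ) with ht
  have hWZt : W = Z + t := by
    apply Complex.ext
    · rw [hW, Complex.add_re, hZ, ht, exp_real_mul_I_re, exp_real_mul_I_re, Complex.ofReal_re]
      linear_combination hII
    · rw [hW, Complex.add_im, hZ, ht, exp_real_mul_I_im, exp_real_mul_I_im, Complex.ofReal_im]
      have h3 : R (n + 1) * Real.sin (π * θ (n + 1) - π * k) = R n * Real.sin (π * θ n) := by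
        rw [← h2a, hI]
      linear_combination (-s) * h3
  have habsZ : ‖Z‖ = s * R n := by
    rw [hZ, norm_mul, Complex.norm_real, Real.norm_eq_abs, Complex.norm_exp]
    have h4 : (-((π * θ n : ℝ) : ℂ) * Complex.I).re = 0 := by simp
    rw [h4, Real.exp_zero, mul_one, abs_of_pos (by positivity)]
  have habsW : ‖W‖ = s * R (n + 1) := by
    rw [hW, norm_mul, Complex.norm_real, Real.norm_eq_abs, Complex.norm_exp]
    have h4 : (-((π * θ (n + 1) - π * k : ℝ) : ℂ) * Complex.I).re = 0 := by simp
    rw [h4, Real.exp_zero, mul_one, abs_of_pos (by positivity)]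
  have hZne : Z ≠ 0 := by
    intro h
    rw [h, norm_zero] at habsZ
    have := mul_pos hs h1R
    linarith
  have hWne : W ≠ 0 := by
    intro h
    rw [h, norm_zero] at habsW
    have := mul_pos hs h2R
    linarith
  have hVs : |V n| < s / 2 := by
    rw [abs_div, abs_of_pos hs] at hV
    rw [div_lt_iff₀ hs] at hV
    linarith
  have habst : ‖t‖ ≤ |V n| * R n := by
    rw [ht, Complex.norm_real, Real.norm_eq_abs, abs_neg, abs_mul, abs_mul]
    have h5 := Real.abs_sin_le_one (π * θ n)
    have h6 : |R n| = R n := abs_of_pos h1R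
    rw [h6]
    calc |V n| * (R n * |Real.sin (π * θ n)|) ≤ |V n| * (R n * 1) := by
          gcongr
      _ = |V n| * R n := by ring
  have ht2 : ‖t‖ ≤ ‖Z‖ / 2 := by
    rw [habsZ]
    calc ‖t‖ ≤ |V n| * R n := habst
      _ ≤ (s / 2) * R n := mul_le_mul_of_nonneg_right hVs.le h1R.le
      _ = s * R n / 2 := by ring
  have hmain := conj_div_diff_bound Z t hZne ht2
  rw [← hWZt] at hmain
  have hsR : ((s * R n : ℝ) : ℂ) ≠ 0 := by
    exact_mod_cast (by positivity : (0 : ℝ) < s * R n).ne'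
  have hsR2 : ((s * R (n + 1) : ℝ) : ℂ) ≠ 0 := by
    exact_mod_cast (by positivity : (0 : ℝ) < s * R (n + 1)).ne'
  have hconjZ : (starRingEnd ℂ) Z
      = ((s * R n : ℝ) : ℂ) * Complex.exp (((π * θ n : ℝ) : ℂ) * Complex.I) := by
    rw [hZ, map_mul, Complex.conj_ofReal, ← Complex.exp_conj]
    congr 2
    simp [map_mul, Complex.conj_ofReal, Complex.conj_I]
  have hconjW : (starRingEnd ℂ) W
      = ((s * R (n + 1) : ℝ) : ℂ)
        * Complex.exp (((π * θ (n + 1) - π * k : ℝ) : ℂ) * Complex.I) := by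
    rw [hW, map_mul, Complex.conj_ofReal, ← Complex.exp_conj]
    congr 2
    simp only [map_mul, map_neg, map_sub, Complex.conj_ofReal, Complex.conj_I]
    ring
  have hZdiv : (starRingEnd ℂ) Z / Z
      = Complex.exp (2 * (π : ℂ) * Complex.I * ((θ n : ℝ) : ℂ)) := by
    rw [hconjZ, hZ, mul_div_mul_left _ _ hsR, ← Complex.exp_sub]
    congr 1
    push_cast
    ring
  have hWdiv : (starRingEnd ℂ) W / W
      = Complex.exp (2 * ((π * θ (n + 1) - π * k : ℝ) : ℂ) * Complex.I) := by
    rw [hconjW, hW, mul_div_mul_left _ _ hsR2, ← Complex.exp_sub]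
    congr 1
    push_cast
    ring
  have e2 : Complex.exp (2 * (π : ℂ) * Complex.I * ((k : ℝ) : ℂ))
      * Complex.exp (2 * ((π * θ (n + 1) - π * k : ℝ) : ℂ) * Complex.I)
      = Complex.exp (2 * (π : ℂ) * Complex.I * ((θ (n + 1) : ℝ) : ℂ)) := by
    rw [← Complex.exp_add]
    congr 1
    push_cast
    ring
  have hgoal : Complex.exp (2 * (π : ℂ) * Complex.I * ((θ (n + 1) : ℝ) : ℂ))
      - Complex.exp (2 * (π : ℂ) * Complex.I * ((k : ℝ) : ℂ))
        * Complex.exp (2 * (π : ℂ) * Complex.I * ((θ n : ℝ) : ℂ))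
      = Complex.exp (2 * (π : ℂ) * Complex.I * ((k : ℝ) : ℂ))
        * ((starRingEnd ℂ) W / W - (starRingEnd ℂ) Z / Z) := by
    rw [hWdiv, hZdiv, mul_sub, e2]
  rw [hgoal, norm_mul]
  have habs1 : ‖ (Complex.exp (2 * (π : ℂ) * Complex.I * ((k : ℝ) : ℂ)))‖ = 1 := by
    rw [Complex.norm_exp]
    have h7 : (2 * (π : ℂ) * Complex.I * ((k : ℝ) : ℂ)).re = 0 := by simp
    rw [h7, Real.exp_zero]
  rw [habs1, one_mul]
  calc ‖ ((starRingEnd ℂ) W / W - (starRingEnd ℂ) Z / Z)‖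
      ≤ 4 * ‖t‖ / ‖Z‖ := hmain
    _ ≤ 4 * |V n| / s := by
        rw [habsZ, div_le_div_iff₀ (by positivity) hs]
        have h8 := mul_le_mul_of_nonneg_right habst hs.le
        nlinarith [h8]


lemma sum_identity (g : ℕ → ℂ) (lam : ℂ) (d : ℕ → ℂ) (n₀ : ℕ) :
    ∀ n, n₀ ≤ n → (lam - 1) * ∑ l ∈ Finset.Icc n₀ n, g l * d l
      = g (n + 1) * d n - g n₀ * d n₀ + (∑ l ∈ Finset.Ico n₀ n, g (l + 1) * (d l - d (l + 1)))
        - ∑ l ∈ Finset.Icc n₀ n, (g (l + 1) - lam * g l) * d l := by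
  intro n hn
  induction n, hn using Nat.le_induction with
  | base => simp [Finset.Icc_self]; ring
  | succ n hn ih =>
      rw [Finset.sum_Icc_succ_top (by omega), Finset.sum_Icc_succ_top (by omega),
        Finset.sum_Ico_succ_top (by omega)]
      linear_combination ih

lemma tele_sum (f : ℕ → ℝ) (n₀ : ℕ) : ∀ n, n₀ ≤ n →
    ∑ l ∈ Finset.Ico n₀ n, (f l - f (l + 1)) = f n₀ - f n := by
  intro n hn
  induction n, hn using Nat.le_induction with
  | base => simp
  | succ n hn ih => rw [Finset.sum_Ico_succ_top (by omega), ih]; ring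

lemma sq_sum (b n₀ : ℕ) (hb : b < n₀) : ∀ n, n₀ ≤ n →
    ∑ l ∈ Finset.Icc n₀ n, (((l : ℝ) - (b : ℝ))⁻¹) ^ 2
      ≤ 2 * ((n₀ : ℝ) - b)⁻¹ - ((n : ℝ) - b)⁻¹ := by
  have hb0 : (1 : ℝ) ≤ (n₀ : ℝ) - b := by
    have : (b : ℝ) + 1 ≤ n₀ := by exact_mod_cast hb
    linarith
  intro n hn
  induction n, hn using Nat.le_induction with
  | base => rw [Finset.Icc_self, Finset.sum_singleton]
            have h0 : 0 < (n₀ : ℝ) - b := by linarith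
            rw [show (2:ℝ) * ((n₀ : ℝ) - b)⁻¹ - ((n₀ : ℝ) - b)⁻¹ = ((n₀ : ℝ) - b)⁻¹ by ring]
            rw [sq, ← mul_inv]
            apply inv_anti₀ h0
            nlinarith
  | succ n hn ih =>
      rw [Finset.sum_Icc_succ_top (by omega)]
      have h1 : (1 : ℝ) ≤ (n : ℝ) - b := by
        have : (n₀ : ℝ) ≤ n := by exact_mod_cast hn
        linarith
      have h2 : ((n + 1 : ℕ) : ℝ) - b = ((n : ℝ) - b) + 1 := by push_cast; ring
      rw [h2]
      have key : (((n : ℝ) - b) + 1)⁻¹ ^ 2 ≤ ((n : ℝ) - b)⁻¹ - (((n : ℝ) - b) + 1)⁻¹ := by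
        rw [sq, ← mul_inv]
        have h3 : 0 < (n : ℝ) - b := by linarith
        have h4 : 0 < ((n : ℝ) - b) + 1 := by linarith
        have e1 : ((n : ℝ) - b)⁻¹ - (((n : ℝ) - b) + 1)⁻¹
            = (((n : ℝ) - b) * (((n : ℝ) - b) + 1))⁻¹ := by
          field_simp; ring
        rw [e1]
        apply inv_anti₀ (by positivity)
        nlinarith
      linarith

lemma abel_bound (g : ℕ → ℂ) (lam : ℂ) (b n₀ n : ℕ) (M : ℝ) (hM : 0 ≤ M)
    (hb : b < n₀) (hn : n₀ ≤ n)
    (hg : ∀ l, ‖ (g l)‖ ≤ 1)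
    (hstep : ∀ l, n₀ ≤ l → l ≤ n → ‖ (g (l + 1) - lam * g l)‖ ≤ M / ((l : ℝ) - b)) :
    ‖ ((lam - 1) * ∑ l ∈ Finset.Icc n₀ n, g l / ((((l : ℝ) - (b : ℝ)) : ℝ) : ℂ))‖
      ≤ (3 + 2 * M) / ((n₀ : ℝ) - b) := by
  set f : ℕ → ℝ := fun l => ((l : ℝ) - b)⁻¹ with hf
  set d : ℕ → ℂ := fun l => ((f l : ℝ) : ℂ) with hd
  have hpos : ∀ l : ℕ, n₀ ≤ l → 0 < (l : ℝ) - b := by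
    intro l hl
    have : (b : ℝ) < n₀ := by exact_mod_cast hb
    have : (n₀ : ℝ) ≤ l := by exact_mod_cast hl
    linarith
  have hfpos : ∀ l : ℕ, n₀ ≤ l → 0 < f l := fun l hl => by
    simp only [hf]; exact inv_pos.mpr (hpos l hl)
  have hfanti : ∀ l : ℕ, n₀ ≤ l → f (l + 1) ≤ f l := by
    intro l hl
    apply inv_anti₀ (hpos l hl)
    push_cast; linarith
  have hfmono : ∀ l : ℕ, n₀ ≤ l → f l ≤ f n₀ := by
    intro l hl
    apply inv_anti₀ (hpos n₀ le_rfl)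
    have : (n₀ : ℝ) ≤ l := by exact_mod_cast hl
    linarith
  have hsum_eq : ∑ l ∈ Finset.Icc n₀ n, g l / ((((l : ℝ) - (b : ℝ)) : ℝ) : ℂ)
      = ∑ l ∈ Finset.Icc n₀ n, g l * d l := by
    apply Finset.sum_congr rfl
    intro l _
    rw [div_eq_mul_inv, hd, hf]
    push_cast
    ring
  rw [hsum_eq, sum_identity g lam d n₀ n hn]
  have habsd : ∀ l : ℕ, n₀ ≤ l → ‖ (d l)‖ = f l := by
    intro l hl
    rw [hd]
    simp only [Complex.norm_real, Real.norm_eq_abs]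
    exact abs_of_pos (hfpos l hl)
  -- boundary terms
  have hA : ‖ (g (n + 1) * d n)‖ ≤ f n := by
    rw [norm_mul, habsd n hn]
    nlinarith [hg (n + 1), hfpos n hn, norm_nonneg (g (n+1))]
  have hB : ‖ (g n₀ * d n₀)‖ ≤ f n₀ := by
    rw [norm_mul, habsd n₀ le_rfl]
    nlinarith [hg n₀, hfpos n₀ le_rfl, norm_nonneg (g n₀)]
  -- middle sum
  have hMid : ‖ (∑ l ∈ Finset.Ico n₀ n, g (l + 1) * (d l - d (l + 1)))‖
      ≤ f n₀ - f n := by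
    calc ‖ (∑ l ∈ Finset.Ico n₀ n, g (l + 1) * (d l - d (l + 1)))‖
        ≤ ∑ l ∈ Finset.Ico n₀ n, ‖ (g (l + 1) * (d l - d (l + 1)))‖ :=
          norm_sum_le _ _
      _ ≤ ∑ l ∈ Finset.Ico n₀ n, (f l - f (l + 1)) := by
          apply Finset.sum_le_sum
          intro l hl
          have hl' : n₀ ≤ l := (Finset.mem_Ico.mp hl).1
          rw [norm_mul]
          have : ‖ (d l - d (l + 1))‖ = f l - f (l + 1) := by
            rw [hd]
            simp only
            rw [← Complex.ofReal_sub, Complex.norm_real, Real.norm_eq_abs]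
            exact abs_of_nonneg (by linarith [hfanti l hl'])
          rw [this]
          nlinarith [hg (l + 1), hfanti l hl', hfpos (l + 1) (by omega),
            norm_nonneg (g (l + 1))]
      _ = f n₀ - f n := tele_sum f n₀ n hn
  -- last sum
  have hLast : ‖ (∑ l ∈ Finset.Icc n₀ n, (g (l + 1) - lam * g l) * d l)‖
      ≤ 2 * M * f n₀ := by
    calc ‖ (∑ l ∈ Finset.Icc n₀ n, (g (l + 1) - lam * g l) * d l)‖
        ≤ ∑ l ∈ Finset.Icc n₀ n, ‖ ((g (l + 1) - lam * g l) * d l)‖ :=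
          norm_sum_le _ _
      _ ≤ ∑ l ∈ Finset.Icc n₀ n, M * (f l) ^ 2 := by
          apply Finset.sum_le_sum
          intro l hl
          obtain ⟨hl1, hl2⟩ := Finset.mem_Icc.mp hl
          rw [norm_mul, habsd l hl1]
          have h1 := hstep l hl1 hl2
          have h2 : M / ((l : ℝ) - b) = M * f l := by rw [hf]; simp [div_eq_mul_inv]
          rw [h2] at h1
          have := hfpos l hl1
          nlinarith [norm_nonneg (g (l + 1) - lam * g l)]
      _ = M * ∑ l ∈ Finset.Icc n₀ n, (f l) ^ 2 := by rw [Finset.mul_sum]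
      _ ≤ M * (2 * f n₀ - f n) := by
          apply mul_le_mul_of_nonneg_left _ hM
          exact sq_sum b n₀ hb n hn
      _ ≤ 2 * M * f n₀ := by nlinarith [hfpos n hn]
  have hfn : 0 < f n := hfpos n hn
  have hfn0 : 0 < f n₀ := hfpos n₀ le_rfl
  have htri : ‖ (g (n + 1) * d n - g n₀ * d n₀
        + (∑ l ∈ Finset.Ico n₀ n, g (l + 1) * (d l - d (l + 1)))
        - ∑ l ∈ Finset.Icc n₀ n, (g (l + 1) - lam * g l) * d l)‖
      ≤ ‖ (g (n + 1) * d n)‖ + ‖ (g n₀ * d n₀)‖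
        + ‖ (∑ l ∈ Finset.Ico n₀ n, g (l + 1) * (d l - d (l + 1)))‖
        + ‖ (∑ l ∈ Finset.Icc n₀ n, (g (l + 1) - lam * g l) * d l)‖ := by
    calc ‖ (g (n + 1) * d n - g n₀ * d n₀
          + (∑ l ∈ Finset.Ico n₀ n, g (l + 1) * (d l - d (l + 1)))
          - ∑ l ∈ Finset.Icc n₀ n, (g (l + 1) - lam * g l) * d l)‖
        ≤ ‖ (g (n + 1) * d n - g n₀ * d n₀
            + (∑ l ∈ Finset.Ico n₀ n, g (l + 1) * (d l - d (l + 1))))‖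
          + ‖ (∑ l ∈ Finset.Icc n₀ n, (g (l + 1) - lam * g l) * d l)‖ :=
          norm_sub_le _ _
      _ ≤ ‖ (g (n + 1) * d n - g n₀ * d n₀)‖
          + ‖ (∑ l ∈ Finset.Ico n₀ n, g (l + 1) * (d l - d (l + 1)))‖
          + ‖ (∑ l ∈ Finset.Icc n₀ n, (g (l + 1) - lam * g l) * d l)‖ := by
          have := norm_add_le (g (n + 1) * d n - g n₀ * d n₀)
            (∑ l ∈ Finset.Ico n₀ n, g (l + 1) * (d l - d (l + 1)))
          linarith
      _ ≤ _ := by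
          have := norm_sub_le (g (n + 1) * d n) (g n₀ * d n₀)
          linarith
  have hfinal : (3 + 2 * M) / ((n₀ : ℝ) - b) = (3 + 2 * M) * f n₀ := by
    rw [hf]; simp [div_eq_mul_inv]
  rw [hfinal]
  calc _ ≤ _ := htri
    _ ≤ (3 + 2 * M) * f n₀ := by nlinarith [hfmono n hn]

lemma lam_abs (k : ℝ) (hk : k ∈ Set.Ioo (0 : ℝ) 1) :
    ‖ (Complex.exp (2 * (Real.pi : ℂ) * Complex.I * ((k : ℝ) : ℂ)) - 1)‖
      = 2 * Real.sin (Real.pi * k) := by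
  obtain ⟨hk0, hk1⟩ := hk
  have hs : 0 < Real.sin (Real.pi * k) := by
    apply Real.sin_pos_of_pos_of_lt_pi
    · positivity
    · nlinarith [Real.pi_pos]
  have h1 : 2 * (Real.pi : ℂ) * Complex.I * ((k : ℝ) : ℂ)
      = ((2 * Real.pi * k : ℝ) : ℂ) * Complex.I := by push_cast; ring
  rw [h1, Complex.exp_mul_I]
  have h2 : (Complex.cos ((2 * Real.pi * k : ℝ) : ℂ) + Complex.sin ((2 * Real.pi * k : ℝ) : ℂ) * Complex.I) - 1
      = ((Real.cos (2 * Real.pi * k) - 1 : ℝ) : ℂ) + ((Real.sin (2 * Real.pi * k) : ℝ) : ℂ) * Complex.I := by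
    rw [← Complex.ofReal_cos, ← Complex.ofReal_sin]
    push_cast
    ring
  rw [h2, Complex.norm_add_mul_I]
  have h3 : (Real.cos (2 * Real.pi * k) - 1) ^ 2 + Real.sin (2 * Real.pi * k) ^ 2
      = (2 * Real.sin (Real.pi * k)) ^ 2 := by
    have e1 : 2 * Real.pi * k = 2 * (Real.pi * k) := by ring
    rw [e1, Real.cos_two_mul, Real.sin_two_mul]
    nlinarith [Real.sin_sq_add_cos_sq (Real.pi * k)]
  rw [h3, Real.sqrt_sq (by positivity)]


/-- Oscillatory sum estimate (complex exponential form): for a Prüfer angle `θ` of a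
solution at energy `E = 2cos(πk)` with `|V(n)| ≤ K/(n-b)`, the weighted sums of
`e^{2πiθ(l)}/(l-b)` are bounded by `C(E,K)/(n₀-b)`. -/
theorem oscillatory_sum_exp (E k : ℝ) (hE : E ∈ Set.Ioo (-2 : ℝ) 2)
    (hk : k ∈ Set.Ioo (0 : ℝ) 1) (hEk : E = 2 * Real.cos (Real.pi * k))
    (b : ℕ) (K : ℝ) (hK : 0 < K) :
    ∃ C : ℝ, 0 < C ∧ ∀ V u R θ : ℕ → ℝ,
      (∀ n : ℕ, b < n → |V n| ≤ K / ((n : ℝ) - (b : ℝ))) →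
      (∀ n : ℕ, b < n → |V n / Real.sin (Real.pi * k)| < 1 / 2) →
      u ≠ 0 → EigenEq V E u → PruferRel k u R θ → BranchCond k θ →
      ∀ n₀ n : ℕ, b < n₀ → n₀ < n →
        ‖ (∑ l ∈ Finset.Icc n₀ n,
            Complex.exp (2 * (Real.pi : ℂ) * Complex.I * ((θ l : ℝ) : ℂ))
              / ((((l : ℝ) - (b : ℝ)) : ℝ) : ℂ))‖
          ≤ C / ((n₀ : ℝ) - (b : ℝ)) := by
  have hs : 0 < Real.sin (Real.pi * k) := by
    obtain ⟨hk0, hk1⟩ := hk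
    apply Real.sin_pos_of_pos_of_lt_pi
    · positivity
    · nlinarith [Real.pi_pos]
  set M : ℝ := 4 * K / Real.sin (Real.pi * k) with hM
  have hMpos : 0 < M := by rw [hM]; positivity
  refine ⟨(3 + 2 * M) / (2 * Real.sin (Real.pi * k)), by positivity, ?_⟩
  intro V u R θ hVbd hVhalf hu hEig hPruf hBr n₀ n hbn₀ hn₀n
  have hg : ∀ l : ℕ, ‖
      (Complex.exp (2 * (Real.pi : ℂ) * Complex.I * ((θ l : ℝ) : ℂ)))‖ ≤ 1 := by
    intro l
    rw [Complex.norm_exp]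
    have h7 : (2 * (Real.pi : ℂ) * Complex.I * ((θ l : ℝ) : ℂ)).re = 0 := by simp
    rw [h7, Real.exp_zero]
  have hstep : ∀ l : ℕ, n₀ ≤ l → l ≤ n →
      ‖ (Complex.exp (2 * (Real.pi : ℂ) * Complex.I * ((θ (l + 1) : ℝ) : ℂ))
          - Complex.exp (2 * (Real.pi : ℂ) * Complex.I * ((k : ℝ) : ℂ))
            * Complex.exp (2 * (Real.pi : ℂ) * Complex.I * ((θ l : ℝ) : ℂ)))‖
        ≤ M / ((l : ℝ) - b) := by
    intro l hl1 hl2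
    have hbl : b < l := lt_of_lt_of_le hbn₀ hl1
    have hl1' : 1 ≤ l := by omega
    obtain ⟨hR1, h1a, h1b⟩ := hPruf l hl1'
    obtain ⟨hR2, h2a, h2b⟩ := hPruf (l + 1) (by omega)
    simp only [Nat.add_sub_cancel] at h2a h2b
    have heig := hEig l hl1'
    rw [hEk] at heig
    have hks := key_step k hk V u R θ l hl1' (hVhalf l hbl) heig hR1 h1a h1b hR2 h2a h2b
    have hlb : 0 < (l : ℝ) - b := by
      have h8 : (b : ℝ) < l := by exact_mod_cast hbl
      linarith
    calc ‖ (Complex.exp (2 * (Real.pi : ℂ) * Complex.I * ((θ (l + 1) : ℝ) : ℂ))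
          - Complex.exp (2 * (Real.pi : ℂ) * Complex.I * ((k : ℝ) : ℂ))
            * Complex.exp (2 * (Real.pi : ℂ) * Complex.I * ((θ l : ℝ) : ℂ)))‖
        ≤ 4 * |V l| / Real.sin (Real.pi * k) := hks
      _ ≤ 4 * (K / ((l : ℝ) - b)) / Real.sin (Real.pi * k) := by
          gcongr
          exact hVbd l hbl
      _ = M / ((l : ℝ) - b) := by rw [hM]; ring
  have habel := abel_bound (fun l => Complex.exp (2 * (Real.pi : ℂ) * Complex.I * ((θ l : ℝ) : ℂ)))
    (Complex.exp (2 * (Real.pi : ℂ) * Complex.I * ((k : ℝ) : ℂ))) b n₀ n M hMpos.le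
    hbn₀ hn₀n.le hg hstep
  rw [norm_mul, lam_abs k hk] at habel
  have hpos : 0 < (n₀ : ℝ) - b := by
    have h8 : (b : ℝ) < n₀ := by exact_mod_cast hbn₀
    linarith
  have heq : (3 + 2 * M) / (2 * Real.sin (Real.pi * k)) / ((n₀ : ℝ) - b)
      = ((3 + 2 * M) / ((n₀ : ℝ) - b)) / (2 * Real.sin (Real.pi * k)) := by ring
  rw [heq, le_div_iff₀ (by positivity)]
  linarith [habel]
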